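/- Let s be an invertible bounded operator on H, and let p and q be orthogonal projections with s p = q s. Let |s| = (s*s)^{1/2} (the positive square root, which is invertible). Then: (i) p commutes with |s| and with |s|^{-1}; (ii) σ := s·|s|^{-1} is unitary; (iii) σ p σ* = q; and (iv) if s − 1 is compact, then σ − 1 is compact. -/

import Mathlib

open ContinuousLinearMap Metric Set
open scoped ComplexInnerProductSpace


lemma adjoint_isCompactOperator
    {H : Type*} [NormedAddCommGroup H] [InnerProductSpace ℂ H] [CompleteSpace H]
    {T : H →L[ℂ] H} (hT : IsCompactOperator ⇑T) :
    IsCompactOperator ⇑(ContinuousLinearMap.adjoint T) := by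
  set S := ContinuousLinearMap.adjoint T with hS
  -- key inequality
  have key : ∀ w : H, ‖S w‖ ^ 2 ≤ ‖w‖ * ‖T (S w)‖ := by
    intro w
    have h1 : (RCLike.re (⟪S w, S w⟫) : ℝ) = ‖S w‖ ^ 2 := inner_self_eq_norm_sq (𝕜 := ℂ) _
    have h2 : ⟪S w, S w⟫ = ⟪w, T (S w)⟫ := ContinuousLinearMap.adjoint_inner_left T (S w) w
    calc ‖S w‖ ^ 2 = RCLike.re (⟪w, T (S w)⟫) := by rw [← h1, h2]
      _ ≤ ‖⟪w, T (S w)⟫‖ := RCLike.re_le_norm _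
      _ ≤ ‖w‖ * ‖T (S w)‖ := norm_inner_le_norm _ _
  -- T ∘ S is compact
  have hTS : IsCompactOperator (⇑T ∘ ⇑S) := hT.comp_clm S
  have hKc : IsCompact (closure (((⇑T ∘ ⇑S)) '' closedBall (0 : H) 1)) := by
    have := (IsCompactOperator.isCompact_closure_image_closedBall (𝕜₁ := ℂ)
      (f := ((T.comp S : H →L[ℂ] H) : H →ₗ[ℂ] H)) (by simpa using hTS) 1)
    simpa using this
  have htb : TotallyBounded ((⇑T ∘ ⇑S) '' closedBall (0 : H) 1) :=
    (hKc.totallyBounded).subset subset_closure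
  -- S '' closedBall 0 1 is totally bounded
  have hStb : TotallyBounded (⇑S '' closedBall (0 : H) 1) := by
    rw [Metric.totallyBounded_iff]
    intro ε hε
    obtain ⟨t, htfin, hcov⟩ := Metric.totallyBounded_iff.mp htb (ε ^ 2 / 8) (by positivity)
    classical
    set g : H → H := fun c => if h : ∃ y ∈ closedBall (0 : H) 1, T (S y) ∈ ball c (ε ^ 2 / 8)
        then S h.choose else 0 with hg
    refine ⟨g '' t, htfin.image _, ?_⟩
    rintro _ ⟨y, hy, rfl⟩
    have hTy : T (S y) ∈ ⋃ c ∈ t, ball c (ε ^ 2 / 8) := hcov ⟨y, hy, rfl⟩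
    obtain ⟨c, hc, hcball⟩ := Set.mem_iUnion₂.mp hTy
    have hex : ∃ y ∈ closedBall (0 : H) 1, T (S y) ∈ ball c (ε ^ 2 / 8) := ⟨y, hy, hcball⟩
    obtain ⟨hy', hball'⟩ := hex.choose_spec
    set y' := hex.choose
    have hgc : g c = S hex.choose := dif_pos hex
    refine Set.mem_iUnion₂.mpr ⟨g c, Set.mem_image_of_mem _ hc, ?_⟩
    rw [hgc]
    -- show S y ∈ ball (S y') ε
    have h1 : ‖T (S y) - T (S y')‖ < ε ^ 2 / 4 := by
      have hc1 : dist (T (S y)) c < ε ^ 2 / 8 := mem_ball.mp hcball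
      have hc2 : dist (T (S y')) c < ε ^ 2 / 8 := mem_ball.mp hball'
      have hd : dist (T (S y)) (T (S y')) ≤ dist (T (S y)) c + dist (T (S y')) c := by
        rw [dist_comm (T (S y')) c]; exact dist_triangle _ _ _
      rw [← dist_eq_norm]; linarith
    have h2 : ‖y - y'‖ ≤ 2 := by
      have := mem_closedBall_zero_iff.mp hy
      have := mem_closedBall_zero_iff.mp hy'
      calc ‖y - y'‖ ≤ ‖y‖ + ‖y'‖ := norm_sub_le _ _
        _ ≤ 2 := by linarith
    have h3 : ‖S y - S y'‖ ^ 2 ≤ ‖y - y'‖ * ‖T (S y) - T (S y')‖ := by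
      have := key (y - y')
      simpa only [map_sub] using this
    have h4 : ‖S y - S y'‖ ^ 2 < ε ^ 2 := by
      have hnn : (0:ℝ) ≤ ‖T (S y) - T (S y')‖ := norm_nonneg _
      nlinarith [norm_nonneg (y - y')]
    rw [mem_ball, dist_eq_norm]
    nlinarith [norm_nonneg (S y - S y')]
  -- conclude
  have : IsCompact (closure (⇑S '' closedBall (0 : H) 1)) :=
    TotallyBounded.isCompact_of_isClosed (totallyBounded_closure.mpr hStb) isClosed_closure
  exact (isCompactOperator_iff_isCompact_closure_image_closedBall (𝕜₁ := ℂ)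
    ((S : H →L[ℂ] H) : H →ₗ[ℂ] H) one_pos).mpr (by simpa using this)

/-- Let `s` be an invertible bounded operator, `p, q` orthogonal projections
with `s * p = q * s`, and let `m = |s|` be the (unique) positive square root of `s* s`. Then
`m` is invertible, `p` commutes with `m` and with `m⁻¹`, `σ := s * m⁻¹` is unitary,
`σ p σ* = q`, and if `s - 1` is compact then `σ - 1` is compact. -/
theorem polar_part_intertwines_projections
    {H : Type*} [NormedAddCommGroup H] [InnerProductSpace ℂ H] [CompleteSpace H]
    [TopologicalSpace.SeparableSpace H]
    (hinf : ¬ FiniteDimensional ℂ H)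
    (s : H →L[ℂ] H) (hs : IsUnit s)
    (p q : H →L[ℂ] H)
    (hpsa : IsSelfAdjoint p) (hpidem : p * p = p)
    (hqsa : IsSelfAdjoint q) (hqidem : q * q = q)
    (hspq : s * p = q * s)
    (m : H →L[ℂ] H) (hmpos : m.IsPositive) (hmsq : m * m = star s * s) :
    IsUnit m ∧
    Commute p m ∧ Commute p (Ring.inverse m) ∧
    (star (s * Ring.inverse m) * (s * Ring.inverse m) = 1 ∧
      (s * Ring.inverse m) * star (s * Ring.inverse m) = 1) ∧
    (s * Ring.inverse m) * p * star (s * Ring.inverse m) = q ∧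
    (IsCompactOperator ⇑(s - 1) → IsCompactOperator ⇑(s * Ring.inverse m - 1)) := by
  classical
  have hts : IsUnit (star s * s) := hs.star.mul hs
  have hmsa : IsSelfAdjoint m := hmpos.isSelfAdjoint
  have hmnn : (0 : H →L[ℂ] H) ≤ m := (ContinuousLinearMap.nonneg_iff_isPositive m).mpr hmpos
  -- p commutes with star s * s
  have hps : p * star s = star s * q := by
    have h := congrArg star hspq
    rw [star_mul, star_mul, hpsa.star_eq, hqsa.star_eq] at h
    exact h
  have hpt : (star s * s) * p = p * (star s * s) := by
    calc (star s * s) * p = star s * (s * p) := by rw [mul_assoc]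
      _ = star s * (q * s) := by rw [hspq]
      _ = (star s * q) * s := by rw [mul_assoc]
      _ = (p * star s) * s := by rw [hps]
      _ = p * (star s * s) := by rw [mul_assoc]
  -- m is invertible
  have hti1 : (star s * s) * Ring.inverse (star s * s) = 1 := Ring.mul_inverse_cancel _ hts
  have hti2 : Ring.inverse (star s * s) * (star s * s) = 1 := Ring.inverse_mul_cancel _ hts
  have htinv_comm : Ring.inverse (star s * s) * m = m * Ring.inverse (star s * s) := by
    have hmt : m * (star s * s) = (star s * s) * m := by
      rw [← hmsq, mul_assoc, ← mul_assoc]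
    calc Ring.inverse (star s * s) * m
        = Ring.inverse (star s * s) * m * ((star s * s) * Ring.inverse (star s * s)) := by
          rw [hti1, mul_one]
      _ = Ring.inverse (star s * s) * (m * (star s * s)) * Ring.inverse (star s * s) := by
          simp only [mul_assoc]
      _ = Ring.inverse (star s * s) * ((star s * s) * m) * Ring.inverse (star s * s) := by
          rw [hmt]
      _ = (Ring.inverse (star s * s) * (star s * s)) * (m * Ring.inverse (star s * s)) := by
          simp only [mul_assoc]
      _ = m * Ring.inverse (star s * s) := by rw [hti2, one_mul]
  have hmi : IsUnit m := by
    refine ⟨⟨m, m * Ring.inverse (star s * s), ?_, ?_⟩, rfl⟩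
    · rw [← mul_assoc, hmsq, hti1]
    · calc m * Ring.inverse (star s * s) * m
          = m * (Ring.inverse (star s * s) * m) := by rw [mul_assoc]
        _ = m * (m * Ring.inverse (star s * s)) := by rw [htinv_comm]
        _ = (m * m) * Ring.inverse (star s * s) := by rw [mul_assoc]
        _ = 1 := by rw [hmsq, hti1]
  -- the symmetry u = p + p - 1
  set u : H →L[ℂ] H := p + p - 1 with hu
  have husa : IsSelfAdjoint u := by
    rw [hu, IsSelfAdjoint, star_sub, star_add, hpsa.star_eq, star_one]
  have huu : u * u = 1 := by
    simp only [hu, mul_sub, sub_mul, add_mul, mul_add, mul_one, one_mul, hpidem]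
    abel
  have hut : u * (star s * s) = (star s * s) * u := by
    simp only [hu, sub_mul, mul_sub, add_mul, mul_add, one_mul, mul_one, hpt]
  have humu_nonneg : (0 : H →L[ℂ] H) ≤ u * m * u := by
    have h := star_right_conjugate_nonneg hmnn u
    rwa [husa.star_eq] at h
  have humusq : (u * m * u) * (u * m * u) = star s * s := by
    calc (u * m * u) * (u * m * u) = u * m * ((u * u) * (m * u)) := by simp only [mul_assoc]
      _ = u * (m * (m * u)) := by rw [huu, one_mul, mul_assoc]
      _ = (u * (m * m)) * u := by simp only [mul_assoc]
      _ = (u * (star s * s)) * u := by rw [hmsq]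
      _ = ((star s * s) * u) * u := by rw [hut]
      _ = (star s * s) * (u * u) := by rw [mul_assoc]
      _ = star s * s := by rw [huu, mul_one]
  have hsq1 : CFC.sqrt (star s * s) = m := CFC.sqrt_unique hmsq hmnn
  have hsq2 : CFC.sqrt (star s * s) = u * m * u := CFC.sqrt_unique humusq humu_nonneg
  have hmueq : m = u * m * u := hsq1.symm.trans hsq2
  have hum : u * m = m * u := by
    conv_rhs => rw [hmueq]
    rw [mul_assoc, mul_assoc, huu, mul_one]
  have hpm : Commute p m := by
    have h2 : p * m + p * m - m = m * p + m * p - m := by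
      have h := hum
      simp only [hu, sub_mul, mul_sub, add_mul, mul_add, one_mul, mul_one] at h
      exact h
    have h3 : p * m + p * m = m * p + m * p := by
      have := congrArg (· + m) h2
      simpa using this
    have h4 : (2 : ℂ) • (p * m) = (2 : ℂ) • (m * p) := by
      rw [two_smul, two_smul]; exact h3
    exact smul_right_injective (H →L[ℂ] H) two_ne_zero h4
  -- p commutes with Ring.inverse m
  have hm1 : m * Ring.inverse m = 1 := Ring.mul_inverse_cancel m hmi
  have hm2 : Ring.inverse m * m = 1 := Ring.inverse_mul_cancel m hmi
  have hpminv : Commute p (Ring.inverse m) := by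
    show p * Ring.inverse m = Ring.inverse m * p
    calc p * Ring.inverse m = (Ring.inverse m * m) * (p * Ring.inverse m) := by
          rw [hm2, one_mul]
      _ = Ring.inverse m * ((m * p) * Ring.inverse m) := by simp only [mul_assoc]
      _ = Ring.inverse m * ((p * m) * Ring.inverse m) := by rw [← hpm.eq]
      _ = Ring.inverse m * (p * (m * Ring.inverse m)) := by simp only [mul_assoc]
      _ = Ring.inverse m * p := by rw [hm1, mul_one]
  -- star of Ring.inverse m
  have hmistar : star (Ring.inverse m) = Ring.inverse m := by
    have hsm : star (Ring.inverse m) * m = 1 := by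
      calc star (Ring.inverse m) * m = star (m * Ring.inverse m) := by
            rw [star_mul, hmsa.star_eq]
        _ = 1 := by rw [hm1, star_one]
    calc star (Ring.inverse m) = star (Ring.inverse m) * (m * Ring.inverse m) := by
          rw [hm1, mul_one]
      _ = (star (Ring.inverse m) * m) * Ring.inverse m := by rw [mul_assoc]
      _ = Ring.inverse m := by rw [hsm, one_mul]
  have hstarσ : star (s * Ring.inverse m) = Ring.inverse m * star s := by
    rw [star_mul, hmistar]
  -- unitarity
  have hσσ1 : star (s * Ring.inverse m) * (s * Ring.inverse m) = 1 := by
    rw [hstarσ]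
    calc Ring.inverse m * star s * (s * Ring.inverse m)
        = Ring.inverse m * ((star s * s) * Ring.inverse m) := by simp only [mul_assoc]
      _ = Ring.inverse m * ((m * m) * Ring.inverse m) := by rw [← hmsq]
      _ = (Ring.inverse m * m) * (m * Ring.inverse m) := by simp only [mul_assoc]
      _ = 1 := by rw [hm1, hm2, one_mul]
  have hσunit : IsUnit (s * Ring.inverse m) := hs.mul (hmi.ringInverse)
  have hσσ2 : (s * Ring.inverse m) * star (s * Ring.inverse m) = 1 := by
    have h := left_inv_eq_right_inv hσσ1 (Ring.mul_inverse_cancel _ hσunit)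
    rw [h]
    exact Ring.mul_inverse_cancel _ hσunit
  -- intertwining
  have hkey : (s * Ring.inverse m) * p = q * (s * Ring.inverse m) := by
    calc (s * Ring.inverse m) * p = s * (Ring.inverse m * p) := by rw [mul_assoc]
      _ = s * (p * Ring.inverse m) := by rw [← hpminv.eq]
      _ = (s * p) * Ring.inverse m := by rw [mul_assoc]
      _ = (q * s) * Ring.inverse m := by rw [hspq]
      _ = q * (s * Ring.inverse m) := by rw [mul_assoc]
  have hconj : (s * Ring.inverse m) * p * star (s * Ring.inverse m) = q := by
    rw [hkey, mul_assoc, hσσ2, mul_one]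
  refine ⟨hmi, hpm, hpminv, ⟨hσσ1, hσσ2⟩, hconj, ?_⟩
  -- compactness
  intro hcp
  have hcps : IsCompactOperator ⇑(star s - 1) := by
    have h := adjoint_isCompactOperator hcp
    rw [← ContinuousLinearMap.star_eq_adjoint, star_sub, star_one] at h
    exact h
  have hct : IsCompactOperator ⇑(star s * s - 1) := by
    have heq : star s * s - 1 = star s * (s - 1) + (star s - 1) := by noncomm_ring
    have h1 : IsCompactOperator ⇑(star s * (s - 1)) := hcp.clm_comp (star s)
    have h2 : IsCompactOperator ⇑(star s * (s - 1) + (star s - 1)) := by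
      exact h1.add hcps
    rwa [heq]
  have hm1u : IsUnit (1 + m) := by
    have hspec : (-1 : ℝ) ∉ spectrum ℝ m := fun h => by
      have := spectrum_nonneg_of_nonneg hmnn h
      linarith
    rw [spectrum.notMem_iff] at hspec
    have heq : (algebraMap ℝ (H →L[ℂ] H)) (-1) - m = -(1 + m) := by
      rw [map_neg, map_one, neg_add]
      abel
    rw [heq, IsUnit.neg_iff] at hspec
    exact hspec
  have hcm : IsCompactOperator ⇑(m - 1) := by
    have heq : (1 + m) * (m - 1) = star s * s - 1 := by
      rw [← hmsq]; noncomm_ring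
    have heq2 : m - 1 = Ring.inverse (1 + m) * (star s * s - 1) := by
      rw [← heq, ← mul_assoc, Ring.inverse_mul_cancel _ hm1u, one_mul]
    rw [heq2]
    exact hct.clm_comp (Ring.inverse (1 + m))
  have heqσ : s * Ring.inverse m - 1 = (s - 1) * Ring.inverse m - (m - 1) * Ring.inverse m := by
    have : (s - 1) * Ring.inverse m - (m - 1) * Ring.inverse m
        = s * Ring.inverse m - m * Ring.inverse m := by noncomm_ring
    rw [this, hm1]
  rw [heqσ]
  have h1 : IsCompactOperator ⇑((s - 1) * Ring.inverse m) := hcp.comp_clm (Ring.inverse m)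
  have h2 : IsCompactOperator ⇑((m - 1) * Ring.inverse m) := hcm.comp_clm (Ring.inverse m)
  exact h1.sub h2
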